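/- Let T be a closed subset of [0,1] containing 0 and 1. For every h ∈ H_T, defined by h(t) = ∫_{[0,t)∩T} h^Δ dλ_Δ with h^Δ ∈ L²(λ_Δ), define g(h) : [0,1] → ℝ by g(h)(t) = ∫₀ᵗ ġ(s) ds where ġ(s) = h^Δ(s)·1_T(s) + Σ_{tᵢ ∈ T_rs} h^Δ(tᵢ)·1_{(tᵢ, σ̄(tᵢ)]}(s). Then g(h) ∈ H¹, the restriction of g(h) to T equals h, and ‖g(h)‖_{H¹} = ‖h‖_{H_T}, i.e., ∫₀¹ ġ(s)² ds = ∫_T (h^Δ)² dλ_Δ. -/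

import Mathlib

open MeasureTheory Set
open scoped ENNReal Classical

noncomputable def rhoBar (T : Set ℝ) (t : ℝ) : ℝ :=
  if t = 0 then 0 else sSup {u | u ∈ T ∧ u < t}

noncomputable def sigmaBar (T : Set ℝ) (t : ℝ) : ℝ :=
  if t = 1 then 1 else sInf {u | u ∈ T ∧ t < u}

noncomputable def lamDelta (T : Set ℝ) : Measure ℝ :=
  Measure.map (rhoBar T) (volume.restrict (Icc 0 1))

noncomputable def htilde (g : ℝ → ℝ) (t : ℝ) : ℝ := ∫ s in Ico (0:ℝ) t, g s

noncomputable def jDensity (T : Set ℝ) (g : ℝ → ℝ) (t : ℝ) : ℝ :=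
  if sigmaBar T t = t then g t
  else (htilde g (sigmaBar T t) - htilde g t) / (sigmaBar T t - t)

noncomputable def gDot (T : Set ℝ) (hΔ : ℝ → ℝ) (s : ℝ) : ℝ :=
  if s ∈ T then hΔ s else hΔ (rhoBar T s)

section aux
variable {T : Set ℝ}

lemma rhoBar_bddAbove (hTsub : T ⊆ Icc 0 1) (s : ℝ) : BddAbove {u | u ∈ T ∧ u < s} :=
  ⟨1, fun u hu => (hTsub hu.1).2⟩

lemma rhoBar_le (hTsub : T ⊆ Icc 0 1) {s : ℝ} (hs : 0 ≤ s) : rhoBar T s ≤ s := by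
  unfold rhoBar
  split
  · next h => exact le_of_eq h.symm
  · exact Real.sSup_le (fun u hu => le_of_lt hu.2) hs

lemma rhoBar_nonneg (h0T : (0:ℝ) ∈ T) (hTsub : T ⊆ Icc 0 1) {s : ℝ} (hs : 0 ≤ s) :
    0 ≤ rhoBar T s := by
  unfold rhoBar
  split
  · exact le_refl _
  · next h =>
    exact le_csSup (rhoBar_bddAbove hTsub s) ⟨h0T, lt_of_le_of_ne hs (Ne.symm h)⟩

lemma rhoBar_mem (hT : IsClosed T) (h0T : (0:ℝ) ∈ T) (hTsub : T ⊆ Icc 0 1) {s : ℝ}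
    (hs : 0 ≤ s) : rhoBar T s ∈ T := by
  unfold rhoBar
  split
  · exact h0T
  · next h =>
    have hne : {u | u ∈ T ∧ u < s}.Nonempty := ⟨0, h0T, lt_of_le_of_ne hs (Ne.symm h)⟩
    have hcl := csSup_mem_closure hne (rhoBar_bddAbove hTsub s)
    have hsub : closure {u | u ∈ T ∧ u < s} ⊆ T := by
      have : closure {u | u ∈ T ∧ u < s} ⊆ closure T :=
        closure_mono (fun u hu => hu.1)
      rwa [hT.closure_eq] at this
    exact hsub hcl

lemma rhoBar_ge (hTsub : T ⊆ Icc 0 1) {t s : ℝ} (ht : t ∈ T) (hts : t < s) :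
    t ≤ rhoBar T s := by
  unfold rhoBar
  split
  · next h => subst h; exact absurd hts (not_lt.2 (hTsub ht).1)
  · exact le_csSup (rhoBar_bddAbove hTsub s) ⟨ht, hts⟩

lemma rhoBar_eq (h0T : (0:ℝ) ∈ T) (hTsub : T ⊆ Icc 0 1) (x : ℝ) :
    rhoBar T x = sSup ({u | u ∈ T ∧ u < x} ∪ {0}) := by
  unfold rhoBar
  split
  · next h =>
    subst h
    have : {u | u ∈ T ∧ u < (0:ℝ)} ∪ {0} = {(0:ℝ)} := by
      apply Subset.antisymm
      · rintro u (⟨hu1, hu2⟩ | hu)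
        · exact absurd hu2 (not_lt.2 (hTsub hu1).1)
        · exact hu
      · exact subset_union_right
    rw [this, csSup_singleton]
  · next h =>
    rcases lt_or_ge 0 x with hx | hx
    · rw [union_eq_self_of_subset_right]
      exact singleton_subset_iff.2 ⟨h0T, hx⟩
    · have he : {u | u ∈ T ∧ u < x} = (∅ : Set ℝ) := by
        ext u
        simp only [mem_setOf_eq, mem_empty_iff_false, iff_false, not_and, not_lt]
        exact fun hu => le_trans hx (hTsub hu).1
      rw [he, Real.sSup_empty, empty_union, csSup_singleton]

lemma monotone_rhoBar (h0T : (0:ℝ) ∈ T) (hTsub : T ⊆ Icc 0 1) : Monotone (rhoBar T) := by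
  intro a b hab
  rw [rhoBar_eq h0T hTsub, rhoBar_eq h0T hTsub]
  apply csSup_le_csSup
  · refine ⟨1, ?_⟩
    rintro u (⟨hu1, _⟩ | hu)
    · exact (hTsub hu1).2
    · simp at hu; simp [hu]
  · exact ⟨0, Or.inr rfl⟩
  · exact union_subset_union_left _ (fun u hu => ⟨hu.1, lt_of_lt_of_le hu.2 hab⟩)
end aux

section aux2
variable {T : Set ℝ}

lemma countable_scattered (hTsub : T ⊆ Icc 0 1) :
    {s : ℝ | s ∈ T ∧ rhoBar T s ≠ s}.Countable := by
  set N := {s : ℝ | s ∈ T ∧ rhoBar T s ≠ s} with hN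
  have key : ∀ s ∈ N, ∃ q : ℚ, rhoBar T s < (q:ℝ) ∧ (q:ℝ) < s := by
    intro s hs
    have hs0 : 0 ≤ s := (hTsub hs.1).1
    exact exists_rat_btwn (lt_of_le_of_ne (rhoBar_le hTsub hs0) hs.2)
  choose! f hf1 hf2 using key
  apply countable_of_injective_of_countable_image (f := f) ?_ (Set.to_countable _)
  intro a ha b hb hab
  by_contra hne
  rcases lt_or_gt_of_ne hne with h | h
  · have h1 : (f a : ℝ) < a := hf2 a ha
    have h2 : a ≤ rhoBar T b := rhoBar_ge hTsub ha.1 h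
    have h3 : rhoBar T b < (f b : ℝ) := hf1 b hb
    rw [hab] at h1; exact absurd (lt_of_lt_of_le h1 (h2.trans h3.le)) (lt_irrefl _)
  · have h1 : (f b : ℝ) < b := hf2 b hb
    have h2 : b ≤ rhoBar T a := rhoBar_ge hTsub hb.1 h
    have h3 : rhoBar T a < (f a : ℝ) := hf1 a ha
    rw [hab] at h3; exact absurd (lt_of_lt_of_le h1 (h2.trans h3.le)) (lt_irrefl _)

end aux2


theorem stmt_10 (T : Set ℝ) (hT : IsClosed T) (hTsub : T ⊆ Icc 0 1)
    (h0T : (0:ℝ) ∈ T) (h1T : (1:ℝ) ∈ T)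
    (hΔ : ℝ → ℝ) (hh : MemLp hΔ 2 (lamDelta T)) :
    MemLp (gDot T hΔ) 2 (volume.restrict (Icc 0 1)) ∧
    (∀ t ∈ T, (∫ s in Ico (0:ℝ) t, gDot T hΔ s)
        = ∫ s in Ico (0:ℝ) t ∩ T, hΔ s ∂(lamDelta T)) ∧
    (∫ s in Icc (0:ℝ) 1, (gDot T hΔ s)^2) = ∫ s, (hΔ s)^2 ∂(lamDelta T) := by
  set μ := volume.restrict (Icc (0:ℝ) 1) with hμdef
  have hmeas : Measurable (rhoBar T) := (monotone_rhoBar h0T hTsub).measurable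
  have haem : AEMeasurable (rhoBar T) μ := hmeas.aemeasurable
  have hsm : AEStronglyMeasurable hΔ (lamDelta T) := hh.1
  -- a.e. equality of gDot with hΔ ∘ rhoBar
  have hNnull : (volume : Measure ℝ) {s : ℝ | s ∈ T ∧ rhoBar T s ≠ s} = 0 :=
    (countable_scattered hTsub).measure_zero _
  have haeV : ∀ᵐ s ∂(volume : Measure ℝ), gDot T hΔ s = hΔ (rhoBar T s) := by
    have h2 : ∀ᵐ s ∂(volume : Measure ℝ), ¬ (s ∈ T ∧ rhoBar T s ≠ s) := by
      rw [ae_iff]; simpa using hNnull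
    filter_upwards [h2] with s hs
    unfold gDot
    split
    · next hsT =>
      have : rhoBar T s = s := by
        by_contra hc; exact hs ⟨hsT, hc⟩
      rw [this]
    · rfl
  have haeμ : gDot T hΔ =ᵐ[μ] fun s => hΔ (rhoBar T s) := ae_restrict_of_ae haeV
  have hcomp : MemLp (hΔ ∘ rhoBar T) 2 μ := (memLp_map_measure_iff hsm haem).1 hh
  refine ⟨hcomp.ae_eq haeμ.symm, ?_, ?_⟩
  · -- part 2
    intro t htT
    have ht01 := hTsub htT
    have hmeasSet : MeasurableSet (Ico (0:ℝ) t ∩ T) :=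
      measurableSet_Ico.inter hT.measurableSet
    have hsmInd : AEStronglyMeasurable ((Ico (0:ℝ) t ∩ T).indicator hΔ) (lamDelta T) :=
      hsm.indicator hmeasSet
    have hkey : ∀ᵐ s ∂μ, (Ico (0:ℝ) t ∩ T).indicator hΔ (rhoBar T s)
        = (Ico (0:ℝ) t).indicator (fun s => hΔ (rhoBar T s)) s := by
      have h1 : ∀ᵐ s ∂μ, s ∈ Icc (0:ℝ) 1 := ae_restrict_mem measurableSet_Icc
      have h2 : ∀ᵐ s ∂μ, s ≠ t := by
        rw [ae_iff]
        have he : {a : ℝ | ¬ a ≠ t} = {t} := by ext a; simp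
        rw [he, hμdef, Measure.restrict_apply (measurableSet_singleton t)]
        exact measure_mono_null inter_subset_left Real.volume_singleton
      filter_upwards [h1, h2] with s hs hst
      have hs0 : 0 ≤ s := hs.1
      by_cases hlt : s < t
      · have hmemI : rhoBar T s ∈ Ico (0:ℝ) t ∩ T :=
          ⟨⟨rhoBar_nonneg h0T hTsub hs0, lt_of_le_of_lt (rhoBar_le hTsub hs0) hlt⟩,
            rhoBar_mem hT h0T hTsub hs0⟩
        rw [indicator_of_mem hmemI, indicator_of_mem (show s ∈ Ico (0:ℝ) t from ⟨hs0, hlt⟩)]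
      · have hts : t < s := lt_of_le_of_ne (not_lt.1 hlt) (Ne.symm hst)
        have hnm : rhoBar T s ∉ Ico (0:ℝ) t ∩ T := fun hc =>
          absurd hc.1.2 (not_lt.2 (rhoBar_ge hTsub htT hts))
        rw [indicator_of_notMem hnm,
          indicator_of_notMem (show s ∉ Ico (0:ℝ) t from fun hc => hlt hc.2)]
    have hrr : μ.restrict (Ico (0:ℝ) t) = volume.restrict (Ico (0:ℝ) t) := by
      have hsub2 : Ico (0:ℝ) t ⊆ Icc (0:ℝ) 1 := fun s hs =>
        ⟨hs.1, le_of_lt (lt_of_lt_of_le hs.2 ht01.2)⟩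
      rw [hμdef, Measure.restrict_restrict measurableSet_Ico, inter_eq_left.2 hsub2]
    calc ∫ s in Ico (0:ℝ) t, gDot T hΔ s
        = ∫ s in Ico (0:ℝ) t, hΔ (rhoBar T s) :=
          integral_congr_ae (ae_restrict_of_ae haeV)
      _ = ∫ s in Ico (0:ℝ) t, hΔ (rhoBar T s) ∂μ := by rw [hrr]
      _ = ∫ s, (Ico (0:ℝ) t).indicator (fun s => hΔ (rhoBar T s)) s ∂μ :=
          (integral_indicator measurableSet_Ico).symm
      _ = ∫ s, (Ico (0:ℝ) t ∩ T).indicator hΔ (rhoBar T s) ∂μ :=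
          integral_congr_ae (hkey.mono fun s hs => hs.symm)
      _ = ∫ x, (Ico (0:ℝ) t ∩ T).indicator hΔ x ∂(lamDelta T) :=
          (integral_map haem hsmInd).symm
      _ = ∫ s in Ico (0:ℝ) t ∩ T, hΔ s ∂(lamDelta T) :=
          integral_indicator hmeasSet
  · -- part 3
    have hsm2 : AEStronglyMeasurable (fun x => (hΔ x)^2) (lamDelta T) := by
      exact (hsm.mul hsm).congr (Filter.Eventually.of_forall fun x => by simp [pow_two])
    calc ∫ s in Icc (0:ℝ) 1, (gDot T hΔ s)^2
        = ∫ s, (hΔ (rhoBar T s))^2 ∂μ := by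
          refine integral_congr_ae (haeμ.mono fun s hs => ?_)
          dsimp only
          rw [hs]
      _ = ∫ s, (hΔ s)^2 ∂(lamDelta T) := (integral_map haem hsm2).symm
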